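/- Let G be a countable group, X a nonempty aperiodic G-subshift, and F ⊂ G a nonempty finite subset. Then there exists a homomorphism (continuous shift-commuting map) φ : X → {0,1}^G such that for every x ∈ X, writing φ(x) = χ_𝒞 for 𝒞 ⊂ G, the translates {cF}_{c∈𝒞} are pairwise disjoint and the translates {cFF⁻¹}_{c∈𝒞} cover G. -/

import Mathlib

open scoped Pointwise

/-- The shift action of `G` on configurations: `(σ^g x)(h) = x(g⁻¹ h)`. -/
def shiftMap {G A : Type*} [Group G] (g : G) (x : G → A) : G → A :=
  fun h => x (g⁻¹ * h)

/-- A subshift: a closed, shift-invariant set of configurations. -/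
def IsSubshift {G A : Type*} [Group G] [TopologicalSpace A] (X : Set (G → A)) : Prop :=
  IsClosed X ∧ ∀ g : G, ∀ x ∈ X, shiftMap g x ∈ X

namespace QuasiTilingAux

variable {G A : Type*} [Group G]

lemma shiftMap_comp (g h : G) (x : G → A) :
    shiftMap g (shiftMap h x) = shiftMap (g * h) x := by
  funext t; simp [shiftMap, mul_assoc]

lemma shiftMap_one (x : G → A) : shiftMap (1 : G) x = x := by
  funext t; simp [shiftMap]

lemma continuous_shiftMap [TopologicalSpace A] (g : G) :
    Continuous (shiftMap g : (G → A) → (G → A)) :=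
  continuous_pi fun h => continuous_apply _

/-- Greedy construction of a maximal `S`-separated clopen set from a list of
candidate clopen sets. -/
def greedy (S : Finset G) : List (Set (G → A)) → Set (G → A)
  | [] => ∅
  | W :: L => greedy S L ∪ (W \ ⋃ h ∈ S, shiftMap h ⁻¹' greedy S L)

lemma greedy_clopen [TopologicalSpace A] (S : Finset G) (L : List (Set (G → A)))
    (hL : ∀ W ∈ L, IsClopen W) : IsClopen (greedy S L) := by
  induction L with
  | nil => exact isClopen_empty
  | cons W L ih =>
    have hW := hL W List.mem_cons_self
    have hrest := ih fun W' hW' => hL W' (List.mem_cons_of_mem _ hW')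
    exact (hrest.union (hW.diff (S.finite_toSet.isClopen_biUnion fun h _ =>
      hrest.preimage (continuous_shiftMap h))))

lemma greedy_disj (S : Finset G) (hSinv : ∀ h ∈ S, h⁻¹ ∈ S)
    (L : List (Set (G → A)))
    (hL : ∀ W ∈ L, ∀ v ∈ W, ∀ h ∈ S, h ≠ 1 → shiftMap h v ∉ W) :
    ∀ x ∈ greedy S L, ∀ h ∈ S, h ≠ 1 → shiftMap h x ∉ greedy S L := by
  induction L with
  | nil => intro x hx; exact absurd hx (Set.notMem_empty x)
  | cons W L ih =>
    have ihW := hL W List.mem_cons_self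
    have ih' := ih fun W' hW' => hL W' (List.mem_cons_of_mem _ hW')
    intro x hx h hhS hh1 hcontr
    rcases hx with hx | ⟨hxW, hxnew⟩
    · rcases hcontr with hc | ⟨hcW, hcnew⟩
      · exact ih' x hx h hhS hh1 hc
      · -- shiftMap h x in the new part, but x ∈ greedy S L, so
        -- shiftMap h⁻¹ (shiftMap h x) = x ∈ greedy S L; contradiction
        apply hcnew
        refine Set.mem_biUnion (hSinv h hhS) ?_
        show shiftMap h⁻¹ (shiftMap h x) ∈ greedy S L
        rw [shiftMap_comp, inv_mul_cancel, shiftMap_one]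
        exact hx
    · rcases hcontr with hc | ⟨hcW, _⟩
      · exact hxnew (Set.mem_biUnion hhS hc)
      · exact ihW x hxW h hhS hh1 hcW

lemma greedy_cover (S : Finset G) (h1S : (1 : G) ∈ S)
    (L : List (Set (G → A))) :
    ∀ x : G → A, (∃ W ∈ L, x ∈ W) → ∃ h ∈ S, shiftMap h x ∈ greedy S L := by
  induction L with
  | nil => rintro x ⟨W, hW, -⟩; exact absurd hW List.not_mem_nil
  | cons W L ih =>
    rintro x ⟨W', hW', hxW'⟩
    rcases List.mem_cons.1 hW' with rfl | hW'L
    · by_cases hnew : x ∈ ⋃ h ∈ S, shiftMap h ⁻¹' greedy S L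
      · rcases Set.mem_iUnion₂.1 hnew with ⟨h, hhS, hx⟩
        exact ⟨h, hhS, Set.mem_union_left _ hx⟩
      · refine ⟨1, h1S, ?_⟩
        rw [shiftMap_one]
        exact Set.mem_union_right _ ⟨hxW', hnew⟩
    · rcases ih x ⟨W', hW'L, hxW'⟩ with ⟨h, hhS, hx⟩
      exact ⟨h, hhS, Set.mem_union_left _ hx⟩

end QuasiTilingAux

open QuasiTilingAux

/-- For any countable group `G`, nonempty aperiodic subshift `X` and nonempty finite
`F ⊆ G`, there is a homomorphism `φ : X → {0,1}^G` such that for each `x ∈ X`, writing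
`φ(x) = χ_𝒞`, the translates `{cF}_{c ∈ 𝒞}` are pairwise disjoint and the translates
`{cFF⁻¹}_{c ∈ 𝒞}` cover `G`. -/
theorem exists_quasi_tiling_homomorphism {G A : Type*} [Group G] [Countable G]
    [TopologicalSpace A] [DiscreteTopology A] [Finite A]
    (X : Set (G → A)) (hX : IsSubshift X) (hXne : X.Nonempty)
    (haper : ∀ x ∈ X, ∀ g : G, shiftMap g x = x → g = 1)
    (F : Finset G) (hF : F.Nonempty) :
    ∃ φ : (G → A) → (G → Bool), ContinuousOn φ X ∧
      (∀ g : G, ∀ x ∈ X, φ (shiftMap g x) = shiftMap g (φ x)) ∧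
      ∀ x ∈ X,
        ({c : G | φ x c = true}.Pairwise fun c c' =>
          Disjoint (c • (F : Set G)) (c' • (F : Set G))) ∧
        (∀ g : G, ∃ c : G, φ x c = true ∧ g ∈ c • ((F : Set G) * (F : Set G)⁻¹)) := by
  classical
  obtain ⟨f₀, hf₀⟩ := hF
  set S : Finset G := F * F⁻¹ with hS
  have h1S : (1 : G) ∈ S := by
    rw [hS]
    have : f₀ * f₀⁻¹ ∈ F * F⁻¹ := Finset.mul_mem_mul hf₀ (Finset.inv_mem_inv hf₀)
    simpa using this
  have hSinv : ∀ h ∈ S, h⁻¹ ∈ S := by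
    intro h hh
    rw [hS, Finset.mem_mul] at hh ⊢
    rcases hh with ⟨a, ha, b, hb, rfl⟩
    rw [Finset.mem_inv] at hb
    rcases hb with ⟨b', hb', rfl⟩
    exact ⟨b', hb', a⁻¹, Finset.inv_mem_inv ha, by group⟩
  -- For each x ∈ X, a clopen "marker" neighborhood
  have key : ∀ x ∈ X, ∃ W : Set (G → A), IsClopen W ∧ x ∈ W ∧
      ∀ v ∈ W, ∀ h ∈ S, h ≠ 1 → shiftMap h v ∉ W := by
    intro x hx
    set t : G → G := fun h =>
      if hh : ∃ t, x (h⁻¹ * t) ≠ x t then Classical.choose hh else 1 with htdef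
    have ht : ∀ h ∈ S, h ≠ 1 → x (h⁻¹ * t h) ≠ x (t h) := by
      intro h hh h1
      have hne : shiftMap h x ≠ x := fun hc => h1 (haper x hx h hc)
      have hex : ∃ t, x (h⁻¹ * t) ≠ x t := by
        rcases Function.ne_iff.1 hne with ⟨u, hu⟩
        exact ⟨u, hu⟩
      simpa [htdef, hex] using Classical.choose_spec hex
    refine ⟨⋂ h ∈ (S : Set G), {y | y (t h) = x (t h) ∧ y (h⁻¹ * t h) = x (h⁻¹ * t h)},
      ?_, ?_, ?_⟩
    · refine S.finite_toSet.isClopen_biInter fun h _ => ?_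
      have e1 : IsClopen {y : G → A | y (t h) = x (t h)} :=
        (isClopen_discrete {x (t h)}).preimage (continuous_apply (t h))
      have e2 : IsClopen {y : G → A | y (h⁻¹ * t h) = x (h⁻¹ * t h)} :=
        (isClopen_discrete {x (h⁻¹ * t h)}).preimage (continuous_apply (h⁻¹ * t h))
      exact e1.inter e2
    · exact Set.mem_biInter fun h _ => ⟨rfl, rfl⟩
    · intro v hv h hhS hh1 hcontr
      have hv1 := Set.mem_iInter₂.1 hv h hhS
      have hc1 := Set.mem_iInter₂.1 hcontr h hhS
      -- (shiftMap h v) (t h) = v (h⁻¹ * t h) = x (h⁻¹ * t h), but also = x (t h)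
      have : x (h⁻¹ * t h) = x (t h) := by
        have e : shiftMap h v (t h) = v (h⁻¹ * t h) := rfl
        rw [← hv1.2, ← e, hc1.1]
      exact ht h hhS hh1 this
  choose W hWclopen hWmem hWsep using key
  -- compactness: finite subcover of X by the markers
  have hXcomp : IsCompact X := hX.1.isCompact
  obtain ⟨T, hT⟩ := hXcomp.elim_finite_subcover
    (fun i : X => W i.1 i.2) (fun i => (hWclopen i i.2).isOpen)
    (fun x hx => Set.mem_iUnion.2 ⟨⟨x, hx⟩, hWmem x hx⟩)
  set L : List (Set (G → A)) := T.toList.map (fun i => W i.1 i.2) with hLdef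
  have hLmem : ∀ W' ∈ L, ∃ i : X, W' = W i.1 i.2 := by
    intro W' hW'
    rcases List.mem_map.1 hW' with ⟨i, _, rfl⟩
    exact ⟨i, rfl⟩
  have hLclopen : ∀ W' ∈ L, IsClopen W' := by
    intro W' hW'; rcases hLmem W' hW' with ⟨i, rfl⟩; exact hWclopen i i.2
  have hLsep : ∀ W' ∈ L, ∀ v ∈ W', ∀ h ∈ S, h ≠ 1 → shiftMap h v ∉ W' := by
    intro W' hW'; rcases hLmem W' hW' with ⟨i, rfl⟩; exact hWsep i i.2
  set V : Set (G → A) := greedy S L with hVdef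
  have hVclopen : IsClopen V := greedy_clopen S L hLclopen
  have hVdisj : ∀ x ∈ V, ∀ h ∈ S, h ≠ 1 → shiftMap h x ∉ V :=
    greedy_disj S hSinv L hLsep
  have hVcover : ∀ x ∈ X, ∃ h ∈ S, shiftMap h x ∈ V := by
    intro x hx
    refine greedy_cover S h1S L x ?_
    rcases Set.mem_iUnion₂.1 (hT hx) with ⟨i, hiT, hxW⟩
    exact ⟨W i i.2, List.mem_map.2 ⟨i, Finset.mem_toList.2 hiT, rfl⟩, hxW⟩
  -- the homomorphism
  refine ⟨fun x c => decide (shiftMap c⁻¹ x ∈ V), ?_, ?_, ?_⟩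
  · -- continuity
    refine Continuous.continuousOn ?_
    refine continuous_pi fun c => ?_
    have hind : Continuous (fun y : G → A => decide (y ∈ V)) := by
      refine IsLocallyConstant.continuous ?_
      intro s
      by_cases ht : true ∈ s <;> by_cases hf : false ∈ s
      · have : (fun y : G → A => decide (y ∈ V)) ⁻¹' s = Set.univ := by
          ext y; by_cases hy : y ∈ V <;> simp [hy, ht, hf]
        rw [this]; exact isOpen_univ
      · have : (fun y : G → A => decide (y ∈ V)) ⁻¹' s = V := by
          ext y; by_cases hy : y ∈ V <;> simp [hy, ht, hf]
        rw [this]; exact hVclopen.isOpen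
      · have : (fun y : G → A => decide (y ∈ V)) ⁻¹' s = Vᶜ := by
          ext y; by_cases hy : y ∈ V <;> simp [hy, ht, hf]
        rw [this]; exact hVclopen.compl.isOpen
      · have : (fun y : G → A => decide (y ∈ V)) ⁻¹' s = ∅ := by
          ext y; by_cases hy : y ∈ V <;> simp [hy, ht, hf]
        rw [this]; exact isOpen_empty
    exact hind.comp (continuous_shiftMap c⁻¹)
  · -- equivariance
    intro g x _
    funext c
    show decide (shiftMap c⁻¹ (shiftMap g x) ∈ V) = decide (shiftMap (g⁻¹ * c)⁻¹ x ∈ V)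
    rw [shiftMap_comp, mul_inv_rev, inv_inv]
  · -- tiling properties
    intro x hx
    constructor
    · intro c hc c' hc' hne
      simp only [Set.mem_setOf_eq, decide_eq_true_eq] at hc hc'
      by_contra hdisj
      rcases Set.not_disjoint_iff.1 hdisj with ⟨g, hg1, hg2⟩
      rcases Set.mem_smul_set.1 hg1 with ⟨f, hfF, hgf⟩
      rcases Set.mem_smul_set.1 hg2 with ⟨f', hf'F, hgf'⟩
      -- c * f = c' * f', so c'⁻¹ * c = f' * f⁻¹ ∈ S
      have hcc : c'⁻¹ * c = f' * f⁻¹ := by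
        have heq : c * f = c' * f' := by
          rw [← smul_eq_mul, ← smul_eq_mul, hgf, hgf']
        have hf' : f' = c'⁻¹ * (c * f) := by
          rw [heq, ← mul_assoc, inv_mul_cancel, one_mul]
        rw [hf']
        simp [mul_assoc]
      have hmem : c'⁻¹ * c ∈ S := by
        rw [hcc, hS]
        exact Finset.mul_mem_mul hf'F (Finset.inv_mem_inv hfF)
      have hne1 : c'⁻¹ * c ≠ 1 := by
        intro h1
        exact hne (by rw [← mul_one c', ← h1, ← mul_assoc, mul_inv_cancel, one_mul])
      have := hVdisj (shiftMap c⁻¹ x) hc (c'⁻¹ * c) hmem hne1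
      apply this
      rw [shiftMap_comp]
      have : c'⁻¹ * c * c⁻¹ = c'⁻¹ := by group
      rw [this]
      exact hc'
    · intro g
      obtain ⟨h, hhS, hhV⟩ := hVcover (shiftMap g⁻¹ x) (hX.2 g⁻¹ x hx)
      refine ⟨g * h⁻¹, ?_, ?_⟩
      · rw [decide_eq_true_eq]
        have : (g * h⁻¹)⁻¹ = h * g⁻¹ := by group
        rw [this, ← shiftMap_comp]
        exact hhV
      · rw [Set.mem_smul_set]
        refine ⟨h, ?_, by simp [smul_eq_mul, mul_assoc]⟩
        have : ((S : Finset G) : Set G) = (F : Set G) * (F : Set G)⁻¹ := by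
          rw [hS, Finset.coe_mul, Finset.coe_inv]
        rw [← this]
        exact_mod_cast hhS
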